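/- arXiv:1907.01270 — 2 statements merged into one kernel-verified Lean document; each statement's English description precedes it below -/
import Mathlib

section
/- (Cut-free completeness of LNS_Kt*) For every formula φ built from atoms, ⊥, →, □, ■: if φ is valid (forced at every world of every Kripke model), then the linear nested sequent ε ⇒ φ is derivable in LNS_Kt*. -/
/-- Formulae of tense logic: atoms (indexed by naturals), ⊥, →, □, ◇, ■, ◆. -/
inductive Formula : Type
  | atom : ℕ → Formula
  | bot : Formula
  | imp : Formula → Formula → Formula
  | box : Formula → Formula
  | dia : Formula → Formula
  | bbox : Formula → Formula
  | bdia : Formula → Formula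

def Formula.neg (A : Formula) : Formula := A.imp .bot
def Formula.and (A B : Formula) : Formula := (A.imp B.neg).neg
def Formula.or (A B : Formula) : Formula := A.neg.imp B
def Formula.top : Formula := Formula.bot.imp .bot

/-- Formulas built from atoms, ⊥, →, □, ■ only (no diamonds). -/
def Formula.NoDia : Formula → Prop
  | .atom _ => True
  | .bot => True
  | .imp A B => A.NoDia ∧ B.NoDia
  | .box A => A.NoDia
  | .dia _ => False
  | .bbox A => A.NoDia
  | .bdia _ => False

/-- Structural connectives: `up` is ↗ and `dn` is ↙. -/
inductive Dir : Type
  | up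
  | dn

/-- Linear nested sequents: a nonempty list of components `Γ ⇒ Δ`
joined by the structural connectives ↗ (`up`) and ↙ (`dn`). -/
inductive LNS : Type
  | single (Γ Δ : Multiset Formula) : LNS
  | up (Γ Δ : Multiset Formula) (S : LNS) : LNS
  | dn (Γ Δ : Multiset Formula) (S : LNS) : LNS

/-- A (possibly empty) context: a list of components, each together with the
structural connective joining it to what follows. -/
abbrev Ctx := List (Multiset Formula × Multiset Formula × Dir)

/-- `plug G S` is the linear nested sequent `G ⇗ S` (just `S` when `G` is empty). -/
def plug : Ctx → LNS → LNS
  | [], S => S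
  | (Γ, Δ, Dir.up) :: G, S => LNS.up Γ Δ (plug G S)
  | (Γ, Δ, Dir.dn) :: G, S => LNS.dn Γ Δ (plug G S)

/-- The structural connective joining the context to what follows it (none if empty). -/
def lastDir : Ctx → Option Dir
  | [] => none
  | [(_, _, d)] => some d
  | _ :: G => lastDir G

/-- Kripke forcing for tense logic. -/
def Force {W : Type} (R : W → W → Prop) (V : W → ℕ → Prop) : W → Formula → Prop
  | w, .atom p => V w p
  | _, .bot => False
  | w, .imp A B => Force R V w A → Force R V w B
  | w, .box A => ∀ v, R w v → Force R V v A
  | w, .dia A => ∃ v, R w v ∧ Force R V v A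
  | w, .bbox A => ∀ v, R v w → Force R V v A
  | w, .bdia A => ∃ v, R v w ∧ Force R V v A

/-- Conjunction of a finite multiset of formulae (empty conjunction is ⊤). -/
noncomputable def bigAnd (Γ : Multiset Formula) : Formula :=
  Γ.toList.foldr Formula.and Formula.top

/-- Disjunction of a finite multiset of formulae (empty disjunction is ⊥). -/
noncomputable def bigOr (Δ : Multiset Formula) : Formula :=
  Δ.toList.foldr Formula.or Formula.bot

/-- The formula translation τ of a linear nested sequent. -/
noncomputable def tau : LNS → Formula
  | .single Γ Δ => (bigAnd Γ).imp (bigOr Δ)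
  | .up Γ Δ S => (bigAnd Γ).imp ((bigOr Δ).or (tau S).box)
  | .dn Γ Δ S => (bigAnd Γ).imp ((bigOr Δ).or (tau S).bbox)

/-- A formula is valid if it is forced at every world of every Kripke model. -/
def Valid (A : Formula) : Prop :=
  ∀ (W : Type) (_ : Nonempty W) (R : W → W → Prop) (V : W → ℕ → Prop) (w : W),
    Force R V w A

/-- A linear nested sequent is falsifiable if its formula translation fails at
some world of some Kripke model. -/
def Falsifiable (S : LNS) : Prop :=
  ∃ (W : Type) (_ : Nonempty W) (R : W → W → Prop) (V : W → ℕ → Prop) (w : W),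
    ¬ Force R V w (tau S)

/-- The simplified calculus LNS_Kt*. -/
inductive DerivStar : LNS → Prop
  | id (G : Ctx) (Γ Δ : Multiset Formula) (p : ℕ) :
      DerivStar (plug G (.single (.atom p ::ₘ Γ) (.atom p ::ₘ Δ)))
  | botL (G : Ctx) (Γ Δ : Multiset Formula) :
      DerivStar (plug G (.single (.bot ::ₘ Γ) Δ))
  | ew (G : Ctx) (Θ Λ : Multiset Formula) (d : Dir) (Γ Δ : Multiset Formula) :
      DerivStar (plug G (.single Θ Λ)) →
      DerivStar (plug (G ++ [(Θ, Λ, d)]) (.single Γ Δ))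
  | impR (G : Ctx) (Γ Δ : Multiset Formula) (A B : Formula) :
      DerivStar (plug G (.single (A ::ₘ Γ) (B ::ₘ A.imp B ::ₘ Δ))) →
      DerivStar (plug G (.single Γ (A.imp B ::ₘ Δ)))
  | impL (G : Ctx) (Γ Δ : Multiset Formula) (A B : Formula) :
      DerivStar (plug G (.single (B ::ₘ A.imp B ::ₘ Γ) Δ)) →
      DerivStar (plug G (.single (A.imp B ::ₘ Γ) (A ::ₘ Δ))) →
      DerivStar (plug G (.single (A.imp B ::ₘ Γ) Δ))
  | boxR (G : Ctx) (Γ Δ : Multiset Formula) (A : Formula) :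
      DerivStar (plug G (.up Γ (A.box ::ₘ Δ) (.single 0 {A}))) →
      DerivStar (plug G (.single Γ (A.box ::ₘ Δ)))
  | bboxR (G : Ctx) (Γ Δ : Multiset Formula) (A : Formula) :
      DerivStar (plug G (.dn Γ (A.bbox ::ₘ Δ) (.single 0 {A}))) →
      DerivStar (plug G (.single Γ (A.bbox ::ₘ Δ)))
  | boxL1 (G : Ctx) (Γ Δ Θ Λ : Multiset Formula) (A : Formula) :
      DerivStar (plug G (.up (A.box ::ₘ Γ) Δ (.single (A ::ₘ Θ) Λ))) →
      DerivStar (plug G (.up (A.box ::ₘ Γ) Δ (.single Θ Λ)))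
  | bboxL1 (G : Ctx) (Γ Δ Θ Λ : Multiset Formula) (A : Formula) :
      DerivStar (plug G (.dn (A.bbox ::ₘ Γ) Δ (.single (A ::ₘ Θ) Λ))) →
      DerivStar (plug G (.dn (A.bbox ::ₘ Γ) Δ (.single Θ Λ)))
  | boxL2 (G : Ctx) (Γ Δ Θ Λ : Multiset Formula) (A : Formula) :
      DerivStar (plug G (.single (A ::ₘ Γ) Δ)) →
      DerivStar (plug G (.dn Γ Δ (.single (A.box ::ₘ Θ) Λ)))
  | bboxL2 (G : Ctx) (Γ Δ Θ Λ : Multiset Formula) (A : Formula) :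
      DerivStar (plug G (.single (A ::ₘ Γ) Δ)) →
      DerivStar (plug G (.up Γ Δ (.single (A.bbox ::ₘ Θ) Λ)))


/-! ### Auxiliary machinery for the completeness proof -/

deriving instance DecidableEq for Formula

/-- Modal depth of a formula. -/
def mdepth : Formula → ℕ
  | .atom _ => 0
  | .bot => 0
  | .imp A B => max (mdepth A) (mdepth B)
  | .box A => mdepth A + 1
  | .dia A => mdepth A + 1
  | .bbox A => mdepth A + 1
  | .bdia A => mdepth A + 1

/-- List of subformulas. -/
def sfl : Formula → List Formula
  | .atom n => [.atom n]
  | .bot => [.bot]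
  | .imp A B => .imp A B :: (sfl A ++ sfl B)
  | .box A => .box A :: sfl A
  | .dia A => .dia A :: sfl A
  | .bbox A => .bbox A :: sfl A
  | .bdia A => .bdia A :: sfl A

lemma self_mem_sfl (A : Formula) : A ∈ sfl A := by
  cases A <;> simp [sfl]

lemma sfl_trans : ∀ (C B A : Formula), A ∈ sfl B → B ∈ sfl C → A ∈ sfl C := by
  intro C
  induction C with
  | atom n => intro B A h1 h2; simp [sfl] at h2; subst h2; simpa [sfl] using h1
  | bot => intro B A h1 h2; simp [sfl] at h2; subst h2; simpa [sfl] using h1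
  | imp C1 C2 ih1 ih2 =>
    intro B A h1 h2
    simp only [sfl, List.mem_cons, List.mem_append] at h2
    rcases h2 with rfl | h2 | h2
    · exact h1
    · simp only [sfl, List.mem_cons, List.mem_append]
      exact Or.inr (Or.inl (ih1 B A h1 h2))
    · simp only [sfl, List.mem_cons, List.mem_append]
      exact Or.inr (Or.inr (ih2 B A h1 h2))
  | box C ih =>
    intro B A h1 h2
    simp only [sfl, List.mem_cons] at h2
    rcases h2 with rfl | h2
    · exact h1
    · simp only [sfl, List.mem_cons]; exact Or.inr (ih B A h1 h2)
  | dia C ih =>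
    intro B A h1 h2
    simp only [sfl, List.mem_cons] at h2
    rcases h2 with rfl | h2
    · exact h1
    · simp only [sfl, List.mem_cons]; exact Or.inr (ih B A h1 h2)
  | bbox C ih =>
    intro B A h1 h2
    simp only [sfl, List.mem_cons] at h2
    rcases h2 with rfl | h2
    · exact h1
    · simp only [sfl, List.mem_cons]; exact Or.inr (ih B A h1 h2)
  | bdia C ih =>
    intro B A h1 h2
    simp only [sfl, List.mem_cons] at h2
    rcases h2 with rfl | h2
    · exact h1
    · simp only [sfl, List.mem_cons]; exact Or.inr (ih B A h1 h2)

lemma noDia_of_mem_sfl : ∀ (C A : Formula), C.NoDia → A ∈ sfl C → A.NoDia := by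
  intro C
  induction C with
  | atom n => intro A h1 h2; simp [sfl] at h2; subst h2; trivial
  | bot => intro A h1 h2; simp [sfl] at h2; subst h2; trivial
  | imp C1 C2 ih1 ih2 =>
    intro A h1 h2
    simp only [sfl, List.mem_cons, List.mem_append] at h2
    rcases h2 with rfl | h2 | h2
    · exact h1
    · exact ih1 A h1.1 h2
    · exact ih2 A h1.2 h2
  | box C ih =>
    intro A h1 h2
    simp only [sfl, List.mem_cons] at h2
    rcases h2 with rfl | h2
    · exact h1
    · exact ih A h1 h2
  | dia C ih => intro A h1 h2; exact absurd h1 (by simp [Formula.NoDia])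
  | bbox C ih =>
    intro A h1 h2
    simp only [sfl, List.mem_cons] at h2
    rcases h2 with rfl | h2
    · exact h1
    · exact ih A h1 h2
  | bdia C ih => intro A h1 h2; exact absurd h1 (by simp [Formula.NoDia])

/-- A subformula-closed set of diamond-free formulas. -/
def Closed (S : Finset Formula) : Prop :=
  ∀ A ∈ S, A.NoDia ∧
    (∀ B C : Formula, A = .imp B C → B ∈ S ∧ C ∈ S) ∧
    (∀ B : Formula, A = .box B → B ∈ S) ∧
    (∀ B : Formula, A = .bbox B → B ∈ S)

lemma closed_sfl (φ : Formula) (hφ : φ.NoDia) : Closed (sfl φ).toFinset := by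
  intro A hA
  rw [List.mem_toFinset] at hA
  refine ⟨noDia_of_mem_sfl φ A hφ hA, ?_, ?_, ?_⟩
  · rintro B C rfl
    constructor <;> rw [List.mem_toFinset]
    · exact sfl_trans φ _ B (by simp [sfl, self_mem_sfl]) hA
    · exact sfl_trans φ _ C (by simp [sfl, self_mem_sfl]) hA
  · rintro B rfl
    rw [List.mem_toFinset]
    exact sfl_trans φ _ B (by simp [sfl, self_mem_sfl]) hA
  · rintro B rfl
    rw [List.mem_toFinset]
    exact sfl_trans φ _ B (by simp [sfl, self_mem_sfl]) hA

/-- Measure: number of "missing" formulas from `S₀` on each side. -/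
def msr (S₀ : Finset Formula) (Γ Δ : Multiset Formula) : ℕ :=
  (S₀ \ Γ.toFinset).card + (S₀ \ Δ.toFinset).card

lemma card_sdiff_cons_le (S₀ : Finset Formula) (Γ : Multiset Formula) (B : Formula) :
    (S₀ \ (B ::ₘ Γ).toFinset).card ≤ (S₀ \ Γ.toFinset).card := by
  apply Finset.card_le_card
  rw [Multiset.toFinset_cons]
  exact Finset.sdiff_subset_sdiff (le_refl _) (Finset.subset_insert _ _)

lemma card_sdiff_cons_lt (S₀ : Finset Formula) (Γ : Multiset Formula) (B : Formula)
    (hB : B ∈ S₀) (hn : B ∉ Γ) :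
    (S₀ \ (B ::ₘ Γ).toFinset).card < (S₀ \ Γ.toFinset).card := by
  apply Finset.card_lt_card
  rw [Multiset.toFinset_cons]
  rw [Finset.ssubset_iff_of_subset
    (Finset.sdiff_subset_sdiff (le_refl _) (Finset.subset_insert _ _))]
  refine ⟨B, ?_, ?_⟩
  · rw [Finset.mem_sdiff, Multiset.mem_toFinset]; exact ⟨hB, hn⟩
  · rw [Finset.mem_sdiff]
    rintro ⟨-, hm⟩
    exact hm (Finset.mem_insert_self _ _)

lemma msr_lt_left (S₀ : Finset Formula) (Γ Δ : Multiset Formula) (B : Formula)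
    (hB : B ∈ S₀) (hn : B ∉ Γ) : msr S₀ (B ::ₘ Γ) Δ < msr S₀ Γ Δ :=
  Nat.add_lt_add_right (card_sdiff_cons_lt S₀ Γ B hB hn) _

lemma msr_lt_right (S₀ : Finset Formula) (Γ Δ : Multiset Formula) (B : Formula)
    (hB : B ∈ S₀) (hn : B ∉ Δ) : msr S₀ Γ (B ::ₘ Δ) < msr S₀ Γ Δ :=
  Nat.add_lt_add_left (card_sdiff_cons_lt S₀ Δ B hB hn) _

lemma msr_lt_both (S₀ : Finset Formula) (Γ Δ : Multiset Formula) (A B : Formula)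
    (hA : A ∈ S₀) (hB : B ∈ S₀) (h : A ∉ Γ ∨ B ∉ Δ) :
    msr S₀ (A ::ₘ Γ) (B ::ₘ Δ) < msr S₀ Γ Δ := by
  rcases h with h | h
  · exact Nat.add_lt_add_of_lt_of_le (card_sdiff_cons_lt S₀ Γ A hA h)
      (card_sdiff_cons_le S₀ Δ B)
  · exact Nat.add_lt_add_of_le_of_lt (card_sdiff_cons_le S₀ Γ A)
      (card_sdiff_cons_lt S₀ Δ B hB h)

/-- Plugging an appended single-component context. -/
lemma plug_append_up (G : Ctx) (a b : Multiset Formula) (S : LNS) :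
    plug (G ++ [(a, b, Dir.up)]) S = plug G (.up a b S) := by
  induction G with
  | nil => rfl
  | cons c G ih =>
    obtain ⟨x, y, d⟩ := c
    cases d <;> simp [plug, ih]

lemma plug_append_dn (G : Ctx) (a b : Multiset Formula) (S : LNS) :
    plug (G ++ [(a, b, Dir.dn)]) S = plug G (.dn a b S) := by
  induction G with
  | nil => rfl
  | cons c G ih =>
    obtain ⟨x, y, d⟩ := c
    cases d <;> simp [plug, ih]

/-- Extract the body of a box. -/
def unbox : Formula → Option Formula
  | .box C => some C
  | _ => none

def unbb : Formula → Option Formula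
  | .bbox C => some C
  | _ => none

lemma unbox_eq_some {F C : Formula} : unbox F = some C ↔ F = .box C := by
  cases F <;> simp [unbox]

lemma unbb_eq_some {F C : Formula} : unbb F = some C ↔ F = .bbox C := by
  cases F <;> simp [unbb]

lemma mem_boxBodies {Γ : Multiset Formula} {C : Formula} :
    C ∈ Γ.filterMap unbox ↔ Formula.box C ∈ Γ := by
  rw [Multiset.mem_filterMap]
  constructor
  · rintro ⟨F, hF, hu⟩; rw [unbox_eq_some] at hu; rwa [hu] at hF
  · intro h; exact ⟨_, h, unbox_eq_some.mpr rfl⟩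

lemma mem_bbBodies {Γ : Multiset Formula} {C : Formula} :
    C ∈ Γ.filterMap unbb ↔ Formula.bbox C ∈ Γ := by
  rw [Multiset.mem_filterMap]
  constructor
  · rintro ⟨F, hF, hu⟩; rw [unbb_eq_some] at hu; rwa [hu] at hF
  · intro h; exact ⟨_, h, unbb_eq_some.mpr rfl⟩

/-- Transferring bodies of boxes on the left of the penultimate component into
the last component, in contrapositive form. -/
lemma chain_box (G : Ctx) (Γp Δp Λ : Multiset Formula) (m : Multiset Formula)
    (hm : ∀ C ∈ m, Formula.box C ∈ Γp) :
    ∀ Θ, ¬ DerivStar (plug G (.up Γp Δp (.single Θ Λ))) →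
      ¬ DerivStar (plug G (.up Γp Δp (.single (m + Θ) Λ))) := by
  induction m using Multiset.induction_on with
  | empty => intro Θ hN; simpa using hN
  | cons C m ih =>
    intro Θ hN
    have hC : Formula.box C ∈ Γp := hm C (Multiset.mem_cons_self _ _)
    have h2 := ih (fun x hx => hm x (Multiset.mem_cons_of_mem hx)) Θ hN
    rw [Multiset.cons_add]
    intro hder
    apply h2
    have e := Multiset.cons_erase hC
    have hstep := DerivStar.boxL1 G (Γp.erase (.box C)) Δp (m + Θ) Λ C
      (by rw [e]; exact hder)
    rwa [e] at hstep

lemma chain_bbox (G : Ctx) (Γp Δp Λ : Multiset Formula) (m : Multiset Formula)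
    (hm : ∀ C ∈ m, Formula.bbox C ∈ Γp) :
    ∀ Θ, ¬ DerivStar (plug G (.dn Γp Δp (.single Θ Λ))) →
      ¬ DerivStar (plug G (.dn Γp Δp (.single (m + Θ) Λ))) := by
  induction m using Multiset.induction_on with
  | empty => intro Θ hN; simpa using hN
  | cons C m ih =>
    intro Θ hN
    have hC : Formula.bbox C ∈ Γp := hm C (Multiset.mem_cons_self _ _)
    have h2 := ih (fun x hx => hm x (Multiset.mem_cons_of_mem hx)) Θ hN
    rw [Multiset.cons_add]
    intro hder
    apply h2
    have e := Multiset.cons_erase hC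
    have hstep := DerivStar.bboxL1 G (Γp.erase (.bbox C)) Δp (m + Θ) Λ C
      (by rw [e]; exact hder)
    rwa [e] at hstep

/-! ### Countermodel trees -/

/-- A finite tree of sequent components: each node has a list of `up`-children
(successor worlds) and `dn`-children (predecessor worlds). -/
inductive STree : Type
  | node (Γ Δ : Multiset Formula) (ups dns : List STree) : STree

namespace STree

def G : STree → Multiset Formula | .node Γ _ _ _ => Γ
def D : STree → Multiset Formula | .node _ Δ _ _ => Δ
def ups : STree → List STree | .node _ _ u _ => u
def dns : STree → List STree | .node _ _ _ v => v

end STree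

/-- Local saturation conditions at a node of a countermodel tree. -/
def NodeOK (Γ Δ : Multiset Formula) (ups dns : List STree) : Prop :=
  (∀ A ∈ Γ, Formula.NoDia A) ∧
  (∀ A ∈ Δ, Formula.NoDia A) ∧
  (Formula.bot ∉ Γ) ∧
  (∀ n : ℕ, Formula.atom n ∈ Γ → Formula.atom n ∉ Δ) ∧
  (∀ A B : Formula, Formula.imp A B ∈ Γ → (B ∈ Γ ∨ A ∈ Δ)) ∧
  (∀ A B : Formula, Formula.imp A B ∈ Δ → (A ∈ Γ ∧ B ∈ Δ)) ∧
  (∀ A : Formula, Formula.box A ∈ Δ → ∃ t ∈ ups, A ∈ t.D) ∧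
  (∀ A : Formula, Formula.bbox A ∈ Δ → ∃ t ∈ dns, A ∈ t.D) ∧
  (∀ t ∈ ups, (∀ A : Formula, Formula.box A ∈ Γ → A ∈ t.G) ∧
              (∀ A : Formula, Formula.bbox A ∈ t.G → A ∈ Γ)) ∧
  (∀ t ∈ dns, (∀ A : Formula, Formula.bbox A ∈ Γ → A ∈ t.G) ∧
              (∀ A : Formula, Formula.box A ∈ t.G → A ∈ Γ))

/-- All nodes of the tree satisfy the local conditions. -/
inductive TreeOK : STree → Prop
  | mk (Γ Δ : Multiset Formula) (ups dns : List STree) :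
      NodeOK Γ Δ ups dns →
      (∀ t ∈ ups, TreeOK t) → (∀ t ∈ dns, TreeOK t) →
      TreeOK (.node Γ Δ ups dns)

lemma TreeOK.toNode {t : STree} (h : TreeOK t) : NodeOK t.G t.D t.ups t.dns := by
  cases h with | mk Γ Δ u v hn _ _ => exact hn

lemma TreeOK.ups_ok {t : STree} (h : TreeOK t) : ∀ c ∈ t.ups, TreeOK c := by
  cases h with | mk Γ Δ u v _ hu _ => exact hu

lemma TreeOK.dns_ok {t : STree} (h : TreeOK t) : ∀ c ∈ t.dns, TreeOK c := by
  cases h with | mk Γ Δ u v _ _ hv => exact hv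

/-- Navigation in a tree: `true` steps go to up-children, `false` to dn-children. -/
def child (t : STree) (x : Bool × ℕ) : Option STree :=
  (if x.1 then t.ups else t.dns)[x.2]?

def go : STree → List (Bool × ℕ) → Option STree
  | t, [] => some t
  | t, x :: r =>
    match child t x with
    | some c => go c r
    | none => none

lemma go_append (T : STree) (p : List (Bool × ℕ)) (x : Bool × ℕ) :
    go T (p ++ [x]) = (go T p).bind fun t => child t x := by
  induction p generalizing T with
  | nil =>
    show go T [x] = child T x
    unfold go
    cases child T x <;> rfl
  | cons y p ih =>
    show go T (y :: (p ++ [x])) = _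
    unfold go
    cases hc : child T y <;> simp [hc, ih]

lemma TreeOK_go : ∀ (p : List (Bool × ℕ)) (T t : STree),
    TreeOK T → go T p = some t → TreeOK t := by
  intro p
  induction p with
  | nil =>
    intro T t hOK h
    simp only [go] at h
    injection h with h; rwa [← h]
  | cons x r ih =>
    intro T t hOK h
    unfold go at h
    cases hc : child T x with
    | none => rw [hc] at h; exact absurd h (by simp)
    | some c =>
      rw [hc] at h
      apply ih c t ?_ h
      unfold child at hc
      by_cases hx : x.1
      · rw [if_pos hx] at hc
        exact hOK.ups_ok c ((by obtain ⟨hi, e⟩ := List.getElem?_eq_some_iff.mp hc; exact e ▸ List.getElem_mem hi))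
      · rw [if_neg hx] at hc
        exact hOK.dns_ok c ((by obtain ⟨hi, e⟩ := List.getElem?_eq_some_iff.mp hc; exact e ▸ List.getElem_mem hi))

/-- The Kripke model structure on positions of a tree. -/
def KRel (T₀ : STree) (p q : List (Bool × ℕ)) : Prop :=
  ((∃ i, q = p ++ [(true, i)]) ∧ (go T₀ q).isSome) ∨
  ((∃ i, p = q ++ [(false, i)]) ∧ (go T₀ p).isSome)

def KVal (T₀ : STree) (p : List (Bool × ℕ)) (n : ℕ) : Prop :=
  ∃ t, go T₀ p = some t ∧ Formula.atom n ∈ t.G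

lemma mem_ups_of_child {t c : STree} {i : ℕ} (hc : child t (true, i) = some c) :
    c ∈ t.ups := by
  unfold child at hc
  simp only [if_pos] at hc
  obtain ⟨hi, e⟩ := List.getElem?_eq_some_iff.mp hc
  exact e ▸ List.getElem_mem hi

lemma mem_dns_of_child {t c : STree} {i : ℕ} (hc : child t (false, i) = some c) :
    c ∈ t.dns := by
  unfold child at hc
  simp only [Bool.false_eq_true, if_neg, if_false] at hc
  obtain ⟨hi, e⟩ := List.getElem?_eq_some_iff.mp hc
  exact e ▸ List.getElem_mem hi

lemma child_of_mem_ups {t c : STree} (h : c ∈ t.ups) :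
    ∃ i, child t (true, i) = some c := by
  obtain ⟨i, hi, e⟩ := List.mem_iff_getElem.mp h
  refine ⟨i, ?_⟩
  unfold child
  simp only [if_pos]
  rw [List.getElem?_eq_some_iff]
  exact ⟨hi, e⟩

lemma child_of_mem_dns {t c : STree} (h : c ∈ t.dns) :
    ∃ i, child t (false, i) = some c := by
  obtain ⟨i, hi, e⟩ := List.mem_iff_getElem.mp h
  refine ⟨i, ?_⟩
  unfold child
  simp only [Bool.false_eq_true, if_neg, if_false]
  rw [List.getElem?_eq_some_iff]
  exact ⟨hi, e⟩

/-- Truth lemma: formulas on the left of a node are forced at that position,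
formulas on the right are not forced. -/
lemma truth (T₀ : STree) (hOK : TreeOK T₀) :
    ∀ (A : Formula) (p : List (Bool × ℕ)) (t : STree), go T₀ p = some t →
      (A ∈ t.G → Force (KRel T₀) (KVal T₀) p A) ∧
      (A ∈ t.D → ¬ Force (KRel T₀) (KVal T₀) p A) := by
  intro A
  induction A with
  | atom n =>
    intro p t hp
    obtain ⟨-, -, -, h4, -⟩ := (TreeOK_go p T₀ t hOK hp).toNode
    constructor
    · intro h
      exact ⟨t, hp, h⟩
    · intro h hf
      obtain ⟨t', hp', h'⟩ := hf
      rw [hp] at hp'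
      injection hp' with e
      exact h4 n (e ▸ h') h
  | bot =>
    intro p t hp
    obtain ⟨-, -, h3, -⟩ := (TreeOK_go p T₀ t hOK hp).toNode
    exact ⟨fun h => absurd h h3, fun _ hf => hf⟩
  | imp A B ihA ihB =>
    intro p t hp
    obtain ⟨-, -, -, -, h5, h6, -⟩ := (TreeOK_go p T₀ t hOK hp).toNode
    constructor
    · intro hG
      show Force (KRel T₀) (KVal T₀) p A → Force (KRel T₀) (KVal T₀) p B
      intro hfA
      rcases h5 A B hG with hB | hA
      · exact (ihB p t hp).1 hB
      · exact absurd hfA ((ihA p t hp).2 hA)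
    · intro hD hf
      obtain ⟨hA, hB⟩ := h6 A B hD
      exact (ihB p t hp).2 hB (hf ((ihA p t hp).1 hA))
  | box A ih =>
    intro p t hp
    obtain ⟨-, -, -, -, -, -, h7, -, h9, -⟩ := (TreeOK_go p T₀ t hOK hp).toNode
    constructor
    · intro hG
      show ∀ v, KRel T₀ p v → Force (KRel T₀) (KVal T₀) v A
      intro q hR
      rcases hR with ⟨⟨i, rfl⟩, hs⟩ | ⟨⟨i, hpq⟩, hs⟩
      · have hgo : go T₀ (p ++ [(true, i)]) = child t (true, i) := by
          rw [go_append, hp]; rfl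
        rw [hgo] at hs
        cases hc : child t (true, i) with
        | none => rw [hc] at hs; simp at hs
        | some tc =>
          have htc : tc ∈ t.ups := mem_ups_of_child hc
          exact (ih (p ++ [(true, i)]) tc (by rw [hgo, hc])).1 ((h9 tc htc).1 A hG)
      · have hgo : go T₀ p = (go T₀ q).bind fun s => child s (false, i) := by
          rw [hpq, go_append]
        rw [hp] at hgo
        cases hq : go T₀ q with
        | none => rw [hq] at hgo; simp at hgo
        | some s =>
          rw [hq] at hgo
          have hcs : child s (false, i) = some t := by
            simpa using hgo.symm
          have hts : t ∈ s.dns := mem_dns_of_child hcs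
          obtain ⟨-, -, -, -, -, -, -, -, -, h10s⟩ :=
            (TreeOK_go q T₀ s hOK hq).toNode
          exact (ih q s hq).1 ((h10s t hts).2 A hG)
    · intro hD hf
      obtain ⟨tc, htc, hAD⟩ := h7 A hD
      obtain ⟨i, hci⟩ := child_of_mem_ups htc
      have hgoq : go T₀ (p ++ [(true, i)]) = some tc := by
        rw [go_append, hp]; simpa using hci
      have hR : KRel T₀ p (p ++ [(true, i)]) :=
        Or.inl ⟨⟨i, rfl⟩, by rw [hgoq]; rfl⟩
      exact (ih _ tc hgoq).2 hAD (hf _ hR)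
  | dia A ih =>
    intro p t hp
    obtain ⟨h1, h2, -⟩ := (TreeOK_go p T₀ t hOK hp).toNode
    constructor
    · intro h; exact absurd (h1 _ h) (by simp [Formula.NoDia])
    · intro h; exact absurd (h2 _ h) (by simp [Formula.NoDia])
  | bbox A ih =>
    intro p t hp
    obtain ⟨-, -, -, -, -, -, -, h8, h9, h10⟩ := (TreeOK_go p T₀ t hOK hp).toNode
    constructor
    · intro hG
      show ∀ v, KRel T₀ v p → Force (KRel T₀) (KVal T₀) v A
      intro q hR
      rcases hR with ⟨⟨i, hpq⟩, hs⟩ | ⟨⟨i, rfl⟩, hs⟩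
      · have hgo : go T₀ p = (go T₀ q).bind fun s => child s (true, i) := by
          rw [hpq, go_append]
        rw [hp] at hgo
        cases hq : go T₀ q with
        | none => rw [hq] at hgo; simp at hgo
        | some s =>
          rw [hq] at hgo
          have hcs : child s (true, i) = some t := by
            simpa using hgo.symm
          have hts : t ∈ s.ups := mem_ups_of_child hcs
          obtain ⟨-, -, -, -, -, -, -, -, h9s, -⟩ :=
            (TreeOK_go q T₀ s hOK hq).toNode
          exact (ih q s hq).1 ((h9s t hts).2 A hG)
      · have hgo : go T₀ (p ++ [(false, i)]) = child t (false, i) := by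
          rw [go_append, hp]; rfl
        rw [hgo] at hs
        cases hc : child t (false, i) with
        | none => rw [hc] at hs; simp at hs
        | some tc =>
          have htc : tc ∈ t.dns := mem_dns_of_child hc
          exact (ih (p ++ [(false, i)]) tc (by rw [hgo, hc])).1 ((h10 tc htc).1 A hG)
    · intro hD hf
      obtain ⟨tc, htc, hAD⟩ := h8 A hD
      obtain ⟨i, hci⟩ := child_of_mem_dns htc
      have hgoq : go T₀ (p ++ [(false, i)]) = some tc := by
        rw [go_append, hp]; simpa using hci
      have hR : KRel T₀ (p ++ [(false, i)]) p :=
        Or.inr ⟨⟨i, rfl⟩, by rw [hgoq]; rfl⟩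
      exact (ih _ tc hgoq).2 hAD (hf _ hR)
  | bdia A ih =>
    intro p t hp
    obtain ⟨h1, h2, -⟩ := (TreeOK_go p T₀ t hOK hp).toNode
    constructor
    · intro h; exact absurd (h1 _ h) (by simp [Formula.NoDia])
    · intro h; exact absurd (h2 _ h) (by simp [Formula.NoDia])

def Lv (S₀ : Finset Formula) (d : ℕ) (Γ : Multiset Formula) : Prop :=
  ∀ A ∈ Γ, A ∈ S₀ ∧ mdepth A ≤ d

def GoodUp (Γp : Multiset Formula) (t : STree) : Prop :=
  TreeOK t ∧ (∀ A : Formula, Formula.box A ∈ Γp → A ∈ t.G) ∧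
  (∀ A : Formula, Formula.bbox A ∈ t.G → A ∈ Γp)

def GoodDn (Γp : Multiset Formula) (t : STree) : Prop :=
  TreeOK t ∧ (∀ A : Formula, Formula.bbox A ∈ Γp → A ∈ t.G) ∧
  (∀ A : Formula, Formula.box A ∈ t.G → A ∈ Γp)

/-- Processing the modal obligations on the right of a saturated component:
either some child forces a transfer into the component's left-hand side, or
all obligations can be realized by good child trees. -/
lemma stepChildren (S₀ : Finset Formula) (hcl : Closed S₀) (c : ℕ)
    (IHc : ∀ (G' : Ctx) (Γ' Δ' : Multiset Formula), Lv S₀ c Γ' → Lv S₀ c Δ' →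
      ¬ DerivStar (plug G' (.single Γ' Δ')) →
      ∃ T : STree, (∀ x ∈ Γ', x ∈ T.G) ∧ (∀ x ∈ Δ', x ∈ T.D) ∧
        Lv S₀ c T.G ∧ Lv S₀ c T.D ∧ TreeOK T ∧
        ¬ DerivStar (plug G' (.single T.G T.D)))
    (G : Ctx) (Γp Δp : Multiset Formula)
    (hΓ : Lv S₀ (c+1) Γp) (hΔ : Lv S₀ (c+1) Δp)
    (hD : ¬ DerivStar (plug G (.single Γp Δp))) :
    ∀ L : List Formula, (∀ x ∈ L, x ∈ Δp) →
      (∃ B, B ∈ S₀ ∧ mdepth B ≤ c + 1 ∧ B ∉ Γp ∧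
        ¬ DerivStar (plug G (.single (B ::ₘ Γp) Δp))) ∨
      (∃ ups dns : List STree,
        (∀ t ∈ ups, GoodUp Γp t) ∧ (∀ t ∈ dns, GoodDn Γp t) ∧
        (∀ x ∈ L, (∀ A : Formula, x = Formula.box A → ∃ t ∈ ups, A ∈ t.D) ∧
                  (∀ A : Formula, x = Formula.bbox A → ∃ t ∈ dns, A ∈ t.D))) := by
  intro L
  induction L with
  | nil => intro _; right; exact ⟨[], [], by simp, by simp, by simp⟩
  | cons x L ihL =>
    intro hL
    rcases ihL (fun y hy => hL y (List.mem_cons_of_mem x hy)) with hre | ⟨ups, dns, hu, hv, hob⟩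
    · exact Or.inl hre
    · have hxΔ : x ∈ Δp := hL x (List.mem_cons_self)
      cases x with
      | box A =>
        have eΔ := Multiset.cons_erase hxΔ
        have hAS : Formula.box A ∈ S₀ := (hΔ _ hxΔ).1
        have hAd : mdepth (Formula.box A) ≤ c + 1 := (hΔ _ hxΔ).2
        have hDup : ¬ DerivStar (plug G (.up Γp Δp (.single 0 {A}))) := by
          intro hder
          apply hD
          have hstep := DerivStar.boxR G Γp (Δp.erase (Formula.box A)) A
            (by rw [eΔ]; exact hder)
          rwa [eΔ] at hstep
        have hDc : ¬ DerivStar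
            (plug G (.up Γp Δp (.single (Γp.filterMap unbox + 0) {A}))) :=
          chain_box G Γp Δp {A} (Γp.filterMap unbox)
            (fun C hC => mem_boxBodies.mp hC) 0 hDup
        rw [add_zero, ← plug_append_up] at hDc
        have hLvb : Lv S₀ c (Γp.filterMap unbox) := by
          intro C hC
          obtain ⟨hS, hd⟩ := hΓ _ (mem_boxBodies.mp hC)
          refine ⟨(hcl _ hS).2.2.1 C rfl, ?_⟩
          simp [mdepth] at hd; omega
        have hLvA : Lv S₀ c {A} := by
          intro y hy
          rw [Multiset.mem_singleton] at hy; rw [hy]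
          refine ⟨(hcl _ hAS).2.2.1 A rfl, ?_⟩
          simp [mdepth] at hAd; omega
        obtain ⟨T, hT1, hT2, hT3, hT4, hT5, hT6⟩ :=
          IHc (G ++ [(Γp, Δp, Dir.up)]) _ _ hLvb hLvA hDc
        by_cases hre : ∃ B, Formula.bbox B ∈ T.G ∧ B ∉ Γp
        · obtain ⟨B, hBt, hBn⟩ := hre
          left
          obtain ⟨hBS', hBd'⟩ := hT3 _ hBt
          refine ⟨B, (hcl _ hBS').2.2.2 B rfl, ?_, hBn, ?_⟩
          · simp [mdepth] at hBd'; omega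
          · intro hder
            apply hT6
            have hstep := DerivStar.bboxL2 G Γp Δp (T.G.erase (Formula.bbox B)) T.D B hder
            rw [Multiset.cons_erase hBt] at hstep
            rwa [← plug_append_up] at hstep
        · push_neg at hre
          right
          refine ⟨T :: ups, dns, ?_, hv, ?_⟩
          · intro t ht
            rcases List.mem_cons.mp ht with rfl | ht
            · exact ⟨hT5, fun A' hA' => hT1 A' (mem_boxBodies.mpr hA'), hre⟩
            · exact hu t ht
          · intro y hy
            rcases List.mem_cons.mp hy with rfl | hy
            · constructor
              · rintro A' hEq
                injection hEq with e
                subst e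
                exact ⟨T, List.mem_cons_self, hT2 A (Multiset.mem_singleton_self A)⟩
              · rintro A' hEq; exact Formula.noConfusion hEq
            · obtain ⟨o1, o2⟩ := hob y hy
              refine ⟨fun A' h => ?_, o2⟩
              obtain ⟨t, ht, hA⟩ := o1 A' h
              exact ⟨t, List.mem_cons_of_mem _ ht, hA⟩
      | bbox A =>
        have eΔ := Multiset.cons_erase hxΔ
        have hAS : Formula.bbox A ∈ S₀ := (hΔ _ hxΔ).1
        have hAd : mdepth (Formula.bbox A) ≤ c + 1 := (hΔ _ hxΔ).2
        have hDup : ¬ DerivStar (plug G (.dn Γp Δp (.single 0 {A}))) := by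
          intro hder
          apply hD
          have hstep := DerivStar.bboxR G Γp (Δp.erase (Formula.bbox A)) A
            (by rw [eΔ]; exact hder)
          rwa [eΔ] at hstep
        have hDc : ¬ DerivStar
            (plug G (.dn Γp Δp (.single (Γp.filterMap unbb + 0) {A}))) :=
          chain_bbox G Γp Δp {A} (Γp.filterMap unbb)
            (fun C hC => mem_bbBodies.mp hC) 0 hDup
        rw [add_zero, ← plug_append_dn] at hDc
        have hLvb : Lv S₀ c (Γp.filterMap unbb) := by
          intro C hC
          obtain ⟨hS, hd⟩ := hΓ _ (mem_bbBodies.mp hC)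
          refine ⟨(hcl _ hS).2.2.2 C rfl, ?_⟩
          simp [mdepth] at hd; omega
        have hLvA : Lv S₀ c {A} := by
          intro y hy
          rw [Multiset.mem_singleton] at hy; rw [hy]
          refine ⟨(hcl _ hAS).2.2.2 A rfl, ?_⟩
          simp [mdepth] at hAd; omega
        obtain ⟨T, hT1, hT2, hT3, hT4, hT5, hT6⟩ :=
          IHc (G ++ [(Γp, Δp, Dir.dn)]) _ _ hLvb hLvA hDc
        by_cases hre : ∃ B, Formula.box B ∈ T.G ∧ B ∉ Γp
        · obtain ⟨B, hBt, hBn⟩ := hre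
          left
          obtain ⟨hBS', hBd'⟩ := hT3 _ hBt
          refine ⟨B, (hcl _ hBS').2.2.1 B rfl, ?_, hBn, ?_⟩
          · simp [mdepth] at hBd'; omega
          · intro hder
            apply hT6
            have hstep := DerivStar.boxL2 G Γp Δp (T.G.erase (Formula.box B)) T.D B hder
            rw [Multiset.cons_erase hBt] at hstep
            rwa [← plug_append_dn] at hstep
        · push_neg at hre
          right
          refine ⟨ups, T :: dns, hu, ?_, ?_⟩
          · intro t ht
            rcases List.mem_cons.mp ht with rfl | ht
            · exact ⟨hT5, fun A' hA' => hT1 A' (mem_bbBodies.mpr hA'), hre⟩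
            · exact hv t ht
          · intro y hy
            rcases List.mem_cons.mp hy with rfl | hy
            · constructor
              · rintro A' hEq; exact Formula.noConfusion hEq
              · rintro A' hEq
                injection hEq with e
                subst e
                exact ⟨T, List.mem_cons_self, hT2 A (Multiset.mem_singleton_self A)⟩
            · obtain ⟨o1, o2⟩ := hob y hy
              refine ⟨o1, fun A' h => ?_⟩
              obtain ⟨t, ht, hA⟩ := o2 A' h
              exact ⟨t, List.mem_cons_of_mem _ ht, hA⟩
      | atom n =>
        right
        refine ⟨ups, dns, hu, hv, ?_⟩
        intro y hy
        rcases List.mem_cons.mp hy with rfl | hy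
        · exact ⟨fun A' hEq => Formula.noConfusion hEq,
                 fun A' hEq => Formula.noConfusion hEq⟩
        · exact hob y hy
      | bot =>
        right
        refine ⟨ups, dns, hu, hv, ?_⟩
        intro y hy
        rcases List.mem_cons.mp hy with rfl | hy
        · exact ⟨fun A' hEq => Formula.noConfusion hEq,
                 fun A' hEq => Formula.noConfusion hEq⟩
        · exact hob y hy
      | imp A B =>
        right
        refine ⟨ups, dns, hu, hv, ?_⟩
        intro y hy
        rcases List.mem_cons.mp hy with rfl | hy
        · exact ⟨fun A' hEq => Formula.noConfusion hEq,
                 fun A' hEq => Formula.noConfusion hEq⟩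
        · exact hob y hy
      | dia A =>
        right
        refine ⟨ups, dns, hu, hv, ?_⟩
        intro y hy
        rcases List.mem_cons.mp hy with rfl | hy
        · exact ⟨fun A' hEq => Formula.noConfusion hEq,
                 fun A' hEq => Formula.noConfusion hEq⟩
        · exact hob y hy
      | bdia A =>
        right
        refine ⟨ups, dns, hu, hv, ?_⟩
        intro y hy
        rcases List.mem_cons.mp hy with rfl | hy
        · exact ⟨fun A' hEq => Formula.noConfusion hEq,
                 fun A' hEq => Formula.noConfusion hEq⟩
        · exact hob y hy

/-- Main search lemma: every underivable end-component within budget can be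
extended to a good countermodel tree. -/
theorem searchMain (S₀ : Finset Formula) (hcl : Closed S₀) :
    ∀ d k (G : Ctx) (Γ Δ : Multiset Formula), Lv S₀ d Γ → Lv S₀ d Δ →
      msr S₀ Γ Δ ≤ k → ¬ DerivStar (plug G (.single Γ Δ)) →
      ∃ T : STree, (∀ x ∈ Γ, x ∈ T.G) ∧ (∀ x ∈ Δ, x ∈ T.D) ∧
        Lv S₀ d T.G ∧ Lv S₀ d T.D ∧
        TreeOK T ∧ ¬ DerivStar (plug G (.single T.G T.D)) := by
  intro d
  induction d using Nat.strong_induction_on with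
  | _ d IHd =>
  intro k
  induction k using Nat.strong_induction_on with
  | _ k IHk =>
  intro G Γ Δ hΓ hΔ hk hD
  by_cases h1 : ∃ A B : Formula, Formula.imp A B ∈ Γ ∧ B ∉ Γ ∧ A ∉ Δ
  · obtain ⟨A, B, hm, hBn, hAn⟩ := h1
    have e := Multiset.cons_erase hm
    have hABS := hΓ _ hm
    have hsub := (hcl _ hABS.1).2.1 A B rfl
    have hdm : mdepth A ≤ d ∧ mdepth B ≤ d := by
      have := hABS.2; simp [mdepth] at this; omega
    have hsplit : ¬ DerivStar (plug G (.single (B ::ₘ Γ) Δ)) ∨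
        ¬ DerivStar (plug G (.single Γ (A ::ₘ Δ))) := by
      by_contra hcon
      push_neg at hcon
      apply hD
      have hstep := DerivStar.impL G (Γ.erase (Formula.imp A B)) Δ A B
        (by rw [e]; exact hcon.1) (by rw [e]; exact hcon.2)
      rwa [e] at hstep
    rcases hsplit with hnew | hnew
    · have hlt : msr S₀ (B ::ₘ Γ) Δ < k :=
        lt_of_lt_of_le (msr_lt_left S₀ Γ Δ B hsub.2 hBn) hk
      obtain ⟨T, t1, t2, t3, t4, t5, t6⟩ := IHk _ hlt G (B ::ₘ Γ) Δ
        (by intro x hx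
            rcases Multiset.mem_cons.mp hx with rfl | hx
            · exact ⟨hsub.2, hdm.2⟩
            · exact hΓ x hx)
        hΔ le_rfl hnew
      exact ⟨T, fun x hx => t1 x (Multiset.mem_cons_of_mem hx), t2, t3, t4, t5, t6⟩
    · have hlt : msr S₀ Γ (A ::ₘ Δ) < k :=
        lt_of_lt_of_le (msr_lt_right S₀ Γ Δ A hsub.1 hAn) hk
      obtain ⟨T, t1, t2, t3, t4, t5, t6⟩ := IHk _ hlt G Γ (A ::ₘ Δ)
        hΓ
        (by intro x hx
            rcases Multiset.mem_cons.mp hx with rfl | hx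
            · exact ⟨hsub.1, hdm.1⟩
            · exact hΔ x hx)
        le_rfl hnew
      exact ⟨T, t1, fun x hx => t2 x (Multiset.mem_cons_of_mem hx), t3, t4, t5, t6⟩
  · by_cases h2 : ∃ A B : Formula, Formula.imp A B ∈ Δ ∧ (A ∉ Γ ∨ B ∉ Δ)
    · obtain ⟨A, B, hm, hor⟩ := h2
      have e := Multiset.cons_erase hm
      have hABS := hΔ _ hm
      have hsub := (hcl _ hABS.1).2.1 A B rfl
      have hdm : mdepth A ≤ d ∧ mdepth B ≤ d := by
        have := hABS.2; simp [mdepth] at this; omega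
      have hnew : ¬ DerivStar (plug G (.single (A ::ₘ Γ) (B ::ₘ Δ))) := by
        intro hp
        apply hD
        have hstep := DerivStar.impR G Γ (Δ.erase (Formula.imp A B)) A B
          (by rw [e]; exact hp)
        rwa [e] at hstep
      have hlt : msr S₀ (A ::ₘ Γ) (B ::ₘ Δ) < k :=
        lt_of_lt_of_le (msr_lt_both S₀ Γ Δ A B hsub.1 hsub.2 hor) hk
      obtain ⟨T, t1, t2, t3, t4, t5, t6⟩ := IHk _ hlt G (A ::ₘ Γ) (B ::ₘ Δ)
        (by intro x hx
            rcases Multiset.mem_cons.mp hx with rfl | hx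
            · exact ⟨hsub.1, hdm.1⟩
            · exact hΓ x hx)
        (by intro x hx
            rcases Multiset.mem_cons.mp hx with rfl | hx
            · exact ⟨hsub.2, hdm.2⟩
            · exact hΔ x hx)
        le_rfl hnew
      exact ⟨T, fun x hx => t1 x (Multiset.mem_cons_of_mem hx),
        fun x hx => t2 x (Multiset.mem_cons_of_mem hx), t3, t4, t5, t6⟩
    · push_neg at h1 h2
      have hbot : Formula.bot ∉ Γ := by
        intro h
        apply hD
        have hstep := DerivStar.botL G (Γ.erase .bot) Δ
        rwa [Multiset.cons_erase h] at hstep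
      have hatom : ∀ n : ℕ, Formula.atom n ∈ Γ → Formula.atom n ∉ Δ := by
        intro n hG hDm
        apply hD
        have hstep := DerivStar.id G (Γ.erase (.atom n)) (Δ.erase (.atom n)) n
        rwa [Multiset.cons_erase hG, Multiset.cons_erase hDm] at hstep
      cases d with
      | zero =>
        refine ⟨.node Γ Δ [] [], fun _ h => h, fun _ h => h, hΓ, hΔ, ?_, hD⟩
        refine TreeOK.mk Γ Δ [] [] ?_ (by simp) (by simp)
        refine ⟨fun A hA => (hcl _ (hΓ _ hA).1).1, fun A hA => (hcl _ (hΔ _ hA).1).1,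
          hbot, hatom, ?_, fun A B hm => h2 A B hm, ?_, ?_, by simp, by simp⟩
        · intro A B hm
          by_cases hB : B ∈ Γ
          · exact Or.inl hB
          · exact Or.inr (h1 A B hm hB)
        · intro A hA
          exact absurd ((hΔ _ hA).2) (by simp [mdepth])
        · intro A hA
          exact absurd ((hΔ _ hA).2) (by simp [mdepth])
      | succ c =>
        have IHc : ∀ (G' : Ctx) (Γ' Δ' : Multiset Formula), Lv S₀ c Γ' → Lv S₀ c Δ' →
            ¬ DerivStar (plug G' (.single Γ' Δ')) →
            ∃ T : STree, (∀ x ∈ Γ', x ∈ T.G) ∧ (∀ x ∈ Δ', x ∈ T.D) ∧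
              Lv S₀ c T.G ∧ Lv S₀ c T.D ∧ TreeOK T ∧
              ¬ DerivStar (plug G' (.single T.G T.D)) :=
          fun G' Γ' Δ' a b hD' =>
            IHd c (Nat.lt_succ_self c) (msr S₀ Γ' Δ') G' Γ' Δ' a b le_rfl hD'
        rcases stepChildren S₀ hcl c IHc G Γ Δ hΓ hΔ hD Δ.toList
            (fun x hx => Multiset.mem_toList.mp hx) with
          ⟨B, hBS, hBd, hBn, hBD⟩ | ⟨ups, dns, hu, hv, hob⟩
        · have hlt : msr S₀ (B ::ₘ Γ) Δ < k :=
            lt_of_lt_of_le (msr_lt_left S₀ Γ Δ B hBS hBn) hk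
          obtain ⟨T, t1, t2, t3, t4, t5, t6⟩ := IHk _ hlt G (B ::ₘ Γ) Δ
            (by intro x hx
                rcases Multiset.mem_cons.mp hx with rfl | hx
                · exact ⟨hBS, hBd⟩
                · exact hΓ x hx)
            hΔ le_rfl hBD
          exact ⟨T, fun x hx => t1 x (Multiset.mem_cons_of_mem hx), t2, t3, t4, t5, t6⟩
        · refine ⟨.node Γ Δ ups dns, fun _ h => h, fun _ h => h, hΓ, hΔ, ?_, hD⟩
          refine TreeOK.mk Γ Δ ups dns ?_ (fun t ht => (hu t ht).1) (fun t ht => (hv t ht).1)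
          refine ⟨fun A hA => (hcl _ (hΓ _ hA).1).1, fun A hA => (hcl _ (hΔ _ hA).1).1,
            hbot, hatom, ?_, fun A B hm => h2 A B hm, ?_, ?_, ?_, ?_⟩
          · intro A B hm
            by_cases hB : B ∈ Γ
            · exact Or.inl hB
            · exact Or.inr (h1 A B hm hB)
          · intro A hA
            exact (hob (Formula.box A) (Multiset.mem_toList.mpr hA)).1 A rfl
          · intro A hA
            exact (hob (Formula.bbox A) (Multiset.mem_toList.mpr hA)).2 A rfl
          · exact fun t ht => ⟨(hu t ht).2.1, (hu t ht).2.2⟩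
          · exact fun t ht => ⟨(hv t ht).2.1, (hv t ht).2.2⟩

/-- Cut-free completeness of LNS_Kt*: every valid formula built from atoms, ⊥,
→, □, ■ is derivable in LNS_Kt*. -/
theorem lnskt_star_complete (φ : Formula) (hφ : φ.NoDia) (hv : Valid φ) :
    DerivStar (LNS.single 0 {φ}) := by
  by_contra hD
  have hcl := closed_sfl φ hφ
  have hφS : φ ∈ (sfl φ).toFinset := List.mem_toFinset.mpr (self_mem_sfl φ)
  obtain ⟨T, -, t2, -, -, hOK, -⟩ :=
    searchMain _ hcl (mdepth φ) (msr (sfl φ).toFinset 0 {φ}) [] 0 {φ}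
      (by intro x hx; simp at hx)
      (by intro x hx; rw [Multiset.mem_singleton] at hx; rw [hx]; exact ⟨hφS, le_rfl⟩)
      le_rfl
      (by exact hD)
  have hφΔ : φ ∈ T.D := t2 φ (Multiset.mem_singleton_self φ)
  have htr := truth T hOK φ [] T rfl
  exact htr.2 hφΔ (hv (List (Bool × ℕ)) ⟨[]⟩ (KRel T) (KVal T) [])
end

section
/- (Admissibility of internal weakening in LNS_Kt) For all multisets Γ, Δ, Σ, Π and all (possibly empty) contexts G, H: if G ⇗ Γ ⇒ Δ ⇗ H is derivable in LNS_Kt, then G ⇗ Γ,Σ ⇒ Δ,Π ⇗ H is derivable in LNS_Kt (with the same structural connectives ⇗ ∈ {↗,↙} in both sequents). -/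
/-- The calculus LNS_Kt. -/
inductive Deriv : LNS → Prop
  | id (G : Ctx) (Γ Δ : Multiset Formula) (p : ℕ) :
      Deriv (plug G (.single (.atom p ::ₘ Γ) (.atom p ::ₘ Δ)))
  | botL (G : Ctx) (Γ Δ : Multiset Formula) :
      Deriv (plug G (.single (.bot ::ₘ Γ) Δ))
  | ew (G : Ctx) (Θ Λ : Multiset Formula) (d : Dir) (Γ Δ : Multiset Formula) :
      Deriv (plug G (.single Θ Λ)) →
      Deriv (plug (G ++ [(Θ, Λ, d)]) (.single Γ Δ))
  | impR (G : Ctx) (Γ Δ : Multiset Formula) (A B : Formula) :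
      Deriv (plug G (.single (A ::ₘ Γ) (B ::ₘ A.imp B ::ₘ Δ))) →
      Deriv (plug G (.single Γ (A.imp B ::ₘ Δ)))
  | impL (G : Ctx) (Γ Δ : Multiset Formula) (A B : Formula) :
      Deriv (plug G (.single (B ::ₘ A.imp B ::ₘ Γ) Δ)) →
      Deriv (plug G (.single (A.imp B ::ₘ Γ) (A ::ₘ Δ))) →
      Deriv (plug G (.single (A.imp B ::ₘ Γ) Δ))
  | boxR1 (G : Ctx) (Γ Δ Θ Λ : Multiset Formula) (A : Formula) :
      Deriv (plug G (.dn Γ (A ::ₘ Δ) (.single Θ (A.box ::ₘ Λ)))) →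
      Deriv (plug G (.dn Γ Δ (.up Θ (A.box ::ₘ Λ) (.single 0 {A})))) →
      Deriv (plug G (.dn Γ Δ (.single Θ (A.box ::ₘ Λ))))
  | bboxR1 (G : Ctx) (Γ Δ Θ Λ : Multiset Formula) (A : Formula) :
      Deriv (plug G (.up Γ (A ::ₘ Δ) (.single Θ (A.bbox ::ₘ Λ)))) →
      Deriv (plug G (.up Γ Δ (.dn Θ (A.bbox ::ₘ Λ) (.single 0 {A})))) →
      Deriv (plug G (.up Γ Δ (.single Θ (A.bbox ::ₘ Λ))))
  | boxR2 (G : Ctx) (Γ Δ : Multiset Formula) (A : Formula) :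
      lastDir G ≠ some Dir.dn →
      Deriv (plug G (.up Γ (A.box ::ₘ Δ) (.single 0 {A}))) →
      Deriv (plug G (.single Γ (A.box ::ₘ Δ)))
  | bboxR2 (G : Ctx) (Γ Δ : Multiset Formula) (A : Formula) :
      lastDir G ≠ some Dir.up →
      Deriv (plug G (.dn Γ (A.bbox ::ₘ Δ) (.single 0 {A}))) →
      Deriv (plug G (.single Γ (A.bbox ::ₘ Δ)))
  | boxL1 (G : Ctx) (Γ Δ Θ Λ : Multiset Formula) (A : Formula) :
      Deriv (plug G (.up (A.box ::ₘ Γ) Δ (.single (A ::ₘ Θ) Λ))) →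
      Deriv (plug G (.up (A.box ::ₘ Γ) Δ (.single Θ Λ)))
  | bboxL1 (G : Ctx) (Γ Δ Θ Λ : Multiset Formula) (A : Formula) :
      Deriv (plug G (.dn (A.bbox ::ₘ Γ) Δ (.single (A ::ₘ Θ) Λ))) →
      Deriv (plug G (.dn (A.bbox ::ₘ Γ) Δ (.single Θ Λ)))
  | boxL2 (G : Ctx) (Γ Δ Θ Λ : Multiset Formula) (A : Formula) :
      Deriv (plug G (.single (A ::ₘ Γ) Δ)) →
      Deriv (plug G (.dn Γ Δ (.single (A.box ::ₘ Θ) Λ)))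
  | bboxL2 (G : Ctx) (Γ Δ Θ Λ : Multiset Formula) (A : Formula) :
      Deriv (plug G (.single (A ::ₘ Γ) Δ)) →
      Deriv (plug G (.up Γ Δ (.single (A.bbox ::ₘ Θ) Λ)))

/-- A trailing context: a list of components, each preceded by the structural
connective joining it to what comes before. -/
abbrev TCtx := List (Dir × Multiset Formula × Multiset Formula)

/-- `withTail Γ Δ H` is the linear nested sequent `(Γ ⇒ Δ) ⇗ H`. -/
def withTail : Multiset Formula → Multiset Formula → TCtx → LNS
  | Γ, Δ, [] => .single Γ Δ
  | Γ, Δ, (Dir.up, Θ, Λ) :: H => .up Γ Δ (withTail Θ Λ H)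
  | Γ, Δ, (Dir.dn, Θ, Λ) :: H => .dn Γ Δ (withTail Θ Λ H)


/-- One-point weakening relation on linear nested sequents. -/
inductive W : LNS → LNS → Prop
  | single (Γ Δ Θ Λ : Multiset Formula) : W (.single Γ Δ) (.single (Γ+Θ) (Δ+Λ))
  | upHere (Γ Δ Θ Λ : Multiset Formula) (S : LNS) : W (.up Γ Δ S) (.up (Γ+Θ) (Δ+Λ) S)
  | dnHere (Γ Δ Θ Λ : Multiset Formula) (S : LNS) : W (.dn Γ Δ S) (.dn (Γ+Θ) (Δ+Λ) S)
  | upThere (Γ Δ : Multiset Formula) (S S' : LNS) : W S S' → W (.up Γ Δ S) (.up Γ Δ S')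
  | dnThere (Γ Δ : Multiset Formula) (S S' : LNS) : W S S' → W (.dn Γ Δ S) (.dn Γ Δ S')

/-- One-point weakening relation on contexts. -/
inductive Wctx : Ctx → Ctx → Prop
  | here (Γ Δ Θ Λ : Multiset Formula) (d : Dir) (G : Ctx) :
      Wctx ((Γ,Δ,d)::G) ((Γ+Θ,Δ+Λ,d)::G)
  | there (x : Multiset Formula × Multiset Formula × Dir) (G G' : Ctx) :
      Wctx G G' → Wctx (x::G) (x::G')

lemma W_lift (G : Ctx) {S S' : LNS} (h : W S S') : W (plug G S) (plug G S') := by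
  induction G with
  | nil => exact h
  | cons x G ih =>
    obtain ⟨Γ, Δ, d⟩ := x
    cases d
    · exact W.upThere _ _ _ _ ih
    · exact W.dnThere _ _ _ _ ih

lemma W_of_Wctx {G G' : Ctx} (h : Wctx G G') (S : LNS) : W (plug G S) (plug G' S) := by
  induction h with
  | here Γ Δ Θ Λ d K =>
    cases d
    · exact W.upHere _ _ _ _ _
    · exact W.dnHere _ _ _ _ _
  | there x K K' h ih =>
    obtain ⟨Γ, Δ, d⟩ := x
    cases d
    · exact W.upThere _ _ _ _ ih
    · exact W.dnThere _ _ _ _ ih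

lemma W_plug (G : Ctx) (S T : LNS) (h : W (plug G S) T) :
    (∃ G', Wctx G G' ∧ T = plug G' S) ∨ (∃ S', W S S' ∧ T = plug G S') := by
  induction G generalizing T with
  | nil => exact Or.inr ⟨T, h, rfl⟩
  | cons x G ih =>
    obtain ⟨Γ, Δ, d⟩ := x
    cases d
    · cases h with
      | upHere _ _ Θ Λ _ => exact Or.inl ⟨_, Wctx.here Γ Δ Θ Λ Dir.up G, rfl⟩
      | upThere _ _ _ T' h' =>
        rcases ih T' h' with ⟨G', h1, rfl⟩ | ⟨S', h1, rfl⟩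
        · exact Or.inl ⟨(Γ,Δ,Dir.up)::G', Wctx.there _ _ _ h1, rfl⟩
        · exact Or.inr ⟨S', h1, rfl⟩
    · cases h with
      | dnHere _ _ Θ Λ _ => exact Or.inl ⟨_, Wctx.here Γ Δ Θ Λ Dir.dn G, rfl⟩
      | dnThere _ _ _ T' h' =>
        rcases ih T' h' with ⟨G', h1, rfl⟩ | ⟨S', h1, rfl⟩
        · exact Or.inl ⟨(Γ,Δ,Dir.dn)::G', Wctx.there _ _ _ h1, rfl⟩
        · exact Or.inr ⟨S', h1, rfl⟩

lemma W_plug_single (G : Ctx) (X Y : Multiset Formula) (T : LNS)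
    (h : W (plug G (.single X Y)) T) :
    (∃ G', Wctx G G' ∧ T = plug G' (.single X Y)) ∨
    (∃ Θ Λ, T = plug G (.single (X+Θ) (Y+Λ))) := by
  rcases W_plug G _ T h with ⟨G', h1, rfl⟩ | ⟨S', h1, rfl⟩
  · exact Or.inl ⟨G', h1, rfl⟩
  · cases h1 with
    | single _ _ Θ Λ => exact Or.inr ⟨Θ, Λ, rfl⟩

lemma W_plug_up (G : Ctx) (X Y : Multiset Formula) (S T : LNS)
    (h : W (plug G (.up X Y S)) T) :
    (∃ G', Wctx G G' ∧ T = plug G' (.up X Y S)) ∨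
    (∃ Θ Λ, T = plug G (.up (X+Θ) (Y+Λ) S)) ∨
    (∃ S', W S S' ∧ T = plug G (.up X Y S')) := by
  rcases W_plug G _ T h with ⟨G', h1, rfl⟩ | ⟨S', h1, rfl⟩
  · exact Or.inl ⟨G', h1, rfl⟩
  · cases h1 with
    | upHere _ _ Θ Λ _ => exact Or.inr (Or.inl ⟨Θ, Λ, rfl⟩)
    | upThere _ _ _ S'' h2 => exact Or.inr (Or.inr ⟨S'', h2, rfl⟩)

lemma W_plug_dn (G : Ctx) (X Y : Multiset Formula) (S T : LNS)
    (h : W (plug G (.dn X Y S)) T) :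
    (∃ G', Wctx G G' ∧ T = plug G' (.dn X Y S)) ∨
    (∃ Θ Λ, T = plug G (.dn (X+Θ) (Y+Λ) S)) ∨
    (∃ S', W S S' ∧ T = plug G (.dn X Y S')) := by
  rcases W_plug G _ T h with ⟨G', h1, rfl⟩ | ⟨S', h1, rfl⟩
  · exact Or.inl ⟨G', h1, rfl⟩
  · cases h1 with
    | dnHere _ _ Θ Λ _ => exact Or.inr (Or.inl ⟨Θ, Λ, rfl⟩)
    | dnThere _ _ _ S'' h2 => exact Or.inr (Or.inr ⟨S'', h2, rfl⟩)

lemma Wctx_append {G K G₂ : Ctx} (h : Wctx (G++K) G₂) :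
    (∃ G', Wctx G G' ∧ G₂ = G'++K) ∨ (∃ K', Wctx K K' ∧ G₂ = G++K') := by
  induction G generalizing G₂ with
  | nil => exact Or.inr ⟨G₂, h, rfl⟩
  | cons x G ih =>
    cases h with
    | here Γ Δ Θ Λ d _ => exact Or.inl ⟨_, Wctx.here Γ Δ Θ Λ d G, rfl⟩
    | there _ _ G₂' h' =>
      rcases ih h' with ⟨G', h1, rfl⟩ | ⟨K', h1, rfl⟩
      · exact Or.inl ⟨x::G', Wctx.there _ _ _ h1, rfl⟩
      · exact Or.inr ⟨K', h1, rfl⟩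

lemma Wctx_singleton {a : Multiset Formula × Multiset Formula × Dir} {G' : Ctx}
    (h : Wctx [a] G') : ∃ Θ Λ, G' = [(a.1+Θ, a.2.1+Λ, a.2.2)] := by
  cases h with
  | here Γ Δ Θ Λ d G => exact ⟨Θ, Λ, rfl⟩
  | there _ _ _ h' => cases h'

lemma lastDir_Wctx {G G' : Ctx} (h : Wctx G G') : lastDir G' = lastDir G := by
  induction h with
  | here Γ Δ Θ Λ d K => cases K <;> rfl
  | there x K K' h ih =>
    obtain ⟨a, K, rfl, b, K', rfl⟩ : ∃ a K₀, K = a :: K₀ ∧ ∃ b K₁, K' = b :: K₁ := by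
      cases h <;> exact ⟨_, _, rfl, _, _, rfl⟩
    simpa [lastDir] using ih

lemma plug_append (G K : Ctx) (S : LNS) : plug (G ++ K) S = plug G (plug K S) := by
  induction G with
  | nil => rfl
  | cons x G ih =>
    obtain ⟨Γ, Δ, d⟩ := x
    cases d <;> simp [plug, ih]

theorem deriv_W {S T : LNS} (h : Deriv S) (hw : W S T) : Deriv T := by
  induction h generalizing T with
  | id G Γ Δ p =>
    rcases W_plug_single G _ _ T hw with ⟨G', h1, rfl⟩ | ⟨Θ, Λ, rfl⟩
    · exact Deriv.id G' Γ Δ p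
    · simp only [Multiset.cons_add]
      exact Deriv.id G (Γ+Θ) (Δ+Λ) p
  | botL G Γ Δ =>
    rcases W_plug_single G _ _ T hw with ⟨G', h1, rfl⟩ | ⟨Θ, Λ, rfl⟩
    · exact Deriv.botL G' Γ Δ
    · simp only [Multiset.cons_add]
      exact Deriv.botL G (Γ+Θ) (Δ+Λ)
  | ew G Θ Λ d Γ Δ _ ih =>
    rcases W_plug_single (G++[(Θ,Λ,d)]) _ _ T hw with ⟨G₂, h1, rfl⟩ | ⟨Θ', Λ', rfl⟩
    · rcases Wctx_append h1 with ⟨G', h2, rfl⟩ | ⟨K', h2, rfl⟩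
      · exact Deriv.ew G' Θ Λ d Γ Δ (ih (W_of_Wctx h2 _))
      · obtain ⟨Θ', Λ', rfl⟩ := Wctx_singleton h2
        exact Deriv.ew G (Θ+Θ') (Λ+Λ') d Γ Δ (ih (W_lift G (W.single Θ Λ Θ' Λ')))
    · exact Deriv.ew G Θ Λ d (Γ+Θ') (Δ+Λ') ‹Deriv (plug G (.single Θ Λ))›
  | impR G Γ Δ A B _ ih =>
    rcases W_plug_single G _ _ T hw with ⟨G', h1, rfl⟩ | ⟨Θ, Λ, rfl⟩
    · exact Deriv.impR G' Γ Δ A B (ih (W_of_Wctx h1 _))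
    · simp only [Multiset.cons_add]
      refine Deriv.impR G (Γ+Θ) (Δ+Λ) A B ?_
      have := ih (W_lift G (W.single (A ::ₘ Γ) (B ::ₘ A.imp B ::ₘ Δ) Θ Λ))
      simpa only [Multiset.cons_add] using this
  | impL G Γ Δ A B _ _ ih1 ih2 =>
    rcases W_plug_single G _ _ T hw with ⟨G', h1, rfl⟩ | ⟨Θ, Λ, rfl⟩
    · exact Deriv.impL G' Γ Δ A B (ih1 (W_of_Wctx h1 _)) (ih2 (W_of_Wctx h1 _))
    · simp only [Multiset.cons_add]
      refine Deriv.impL G (Γ+Θ) (Δ+Λ) A B ?_ ?_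
      · have := ih1 (W_lift G (W.single (B ::ₘ A.imp B ::ₘ Γ) Δ Θ Λ))
        simpa only [Multiset.cons_add] using this
      · have := ih2 (W_lift G (W.single (A.imp B ::ₘ Γ) (A ::ₘ Δ) Θ Λ))
        simpa only [Multiset.cons_add] using this
  | boxR1 G Γ Δ Θ Λ A _ _ ih1 ih2 =>
    rcases W_plug_dn G _ _ _ T hw with ⟨G', h1, rfl⟩ | ⟨Θ', Λ', rfl⟩ | ⟨S', h1, rfl⟩
    · exact Deriv.boxR1 G' Γ Δ Θ Λ A (ih1 (W_of_Wctx h1 _)) (ih2 (W_of_Wctx h1 _))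
    · refine Deriv.boxR1 G (Γ+Θ') (Δ+Λ') Θ Λ A ?_ ?_
      · have := ih1 (W_lift G (W.dnHere Γ (A ::ₘ Δ) Θ' Λ' _))
        simpa only [Multiset.cons_add] using this
      · exact ih2 (W_lift G (W.dnHere Γ Δ Θ' Λ' _))
    · cases h1 with
      | single _ _ Θ' Λ' =>
        simp only [Multiset.cons_add]
        refine Deriv.boxR1 G Γ Δ (Θ+Θ') (Λ+Λ') A ?_ ?_
        · have := ih1 (W_lift G (W.dnThere Γ (A ::ₘ Δ) _ _ (W.single Θ (A.box ::ₘ Λ) Θ' Λ')))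
          simpa only [Multiset.cons_add] using this
        · have := ih2 (W_lift G (W.dnThere Γ Δ _ _ (W.upHere Θ (A.box ::ₘ Λ) Θ' Λ' _)))
          simpa only [Multiset.cons_add] using this
  | bboxR1 G Γ Δ Θ Λ A _ _ ih1 ih2 =>
    rcases W_plug_up G _ _ _ T hw with ⟨G', h1, rfl⟩ | ⟨Θ', Λ', rfl⟩ | ⟨S', h1, rfl⟩
    · exact Deriv.bboxR1 G' Γ Δ Θ Λ A (ih1 (W_of_Wctx h1 _)) (ih2 (W_of_Wctx h1 _))
    · refine Deriv.bboxR1 G (Γ+Θ') (Δ+Λ') Θ Λ A ?_ ?_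
      · have := ih1 (W_lift G (W.upHere Γ (A ::ₘ Δ) Θ' Λ' _))
        simpa only [Multiset.cons_add] using this
      · exact ih2 (W_lift G (W.upHere Γ Δ Θ' Λ' _))
    · cases h1 with
      | single _ _ Θ' Λ' =>
        simp only [Multiset.cons_add]
        refine Deriv.bboxR1 G Γ Δ (Θ+Θ') (Λ+Λ') A ?_ ?_
        · have := ih1 (W_lift G (W.upThere Γ (A ::ₘ Δ) _ _ (W.single Θ (A.bbox ::ₘ Λ) Θ' Λ')))
          simpa only [Multiset.cons_add] using this
        · have := ih2 (W_lift G (W.upThere Γ Δ _ _ (W.dnHere Θ (A.bbox ::ₘ Λ) Θ' Λ' _)))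
          simpa only [Multiset.cons_add] using this
  | boxR2 G Γ Δ A hd _ ih =>
    rcases W_plug_single G _ _ T hw with ⟨G', h1, rfl⟩ | ⟨Θ, Λ, rfl⟩
    · exact Deriv.boxR2 G' Γ Δ A (by rw [lastDir_Wctx h1]; exact hd) (ih (W_of_Wctx h1 _))
    · simp only [Multiset.cons_add]
      refine Deriv.boxR2 G (Γ+Θ) (Δ+Λ) A hd ?_
      have := ih (W_lift G (W.upHere Γ (A.box ::ₘ Δ) Θ Λ _))
      simpa only [Multiset.cons_add] using this
  | bboxR2 G Γ Δ A hd _ ih =>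
    rcases W_plug_single G _ _ T hw with ⟨G', h1, rfl⟩ | ⟨Θ, Λ, rfl⟩
    · exact Deriv.bboxR2 G' Γ Δ A (by rw [lastDir_Wctx h1]; exact hd) (ih (W_of_Wctx h1 _))
    · simp only [Multiset.cons_add]
      refine Deriv.bboxR2 G (Γ+Θ) (Δ+Λ) A hd ?_
      have := ih (W_lift G (W.dnHere Γ (A.bbox ::ₘ Δ) Θ Λ _))
      simpa only [Multiset.cons_add] using this
  | boxL1 G Γ Δ Θ Λ A _ ih =>
    rcases W_plug_up G _ _ _ T hw with ⟨G', h1, rfl⟩ | ⟨Θ', Λ', rfl⟩ | ⟨S', h1, rfl⟩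
    · exact Deriv.boxL1 G' Γ Δ Θ Λ A (ih (W_of_Wctx h1 _))
    · simp only [Multiset.cons_add]
      refine Deriv.boxL1 G (Γ+Θ') (Δ+Λ') Θ Λ A ?_
      have := ih (W_lift G (W.upHere (A.box ::ₘ Γ) Δ Θ' Λ' _))
      simpa only [Multiset.cons_add] using this
    · cases h1 with
      | single _ _ Θ' Λ' =>
        refine Deriv.boxL1 G Γ Δ (Θ+Θ') (Λ+Λ') A ?_
        have := ih (W_lift G (W.upThere (A.box ::ₘ Γ) Δ _ _ (W.single (A ::ₘ Θ) Λ Θ' Λ')))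
        simpa only [Multiset.cons_add] using this
  | bboxL1 G Γ Δ Θ Λ A _ ih =>
    rcases W_plug_dn G _ _ _ T hw with ⟨G', h1, rfl⟩ | ⟨Θ', Λ', rfl⟩ | ⟨S', h1, rfl⟩
    · exact Deriv.bboxL1 G' Γ Δ Θ Λ A (ih (W_of_Wctx h1 _))
    · simp only [Multiset.cons_add]
      refine Deriv.bboxL1 G (Γ+Θ') (Δ+Λ') Θ Λ A ?_
      have := ih (W_lift G (W.dnHere (A.bbox ::ₘ Γ) Δ Θ' Λ' _))
      simpa only [Multiset.cons_add] using this
    · cases h1 with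
      | single _ _ Θ' Λ' =>
        refine Deriv.bboxL1 G Γ Δ (Θ+Θ') (Λ+Λ') A ?_
        have := ih (W_lift G (W.dnThere (A.bbox ::ₘ Γ) Δ _ _ (W.single (A ::ₘ Θ) Λ Θ' Λ')))
        simpa only [Multiset.cons_add] using this
  | boxL2 G Γ Δ Θ Λ A hprem ih =>
    rcases W_plug_dn G _ _ _ T hw with ⟨G', h1, rfl⟩ | ⟨Θ', Λ', rfl⟩ | ⟨S', h1, rfl⟩
    · exact Deriv.boxL2 G' Γ Δ Θ Λ A (ih (W_of_Wctx h1 _))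
    · refine Deriv.boxL2 G (Γ+Θ') (Δ+Λ') Θ Λ A ?_
      have := ih (W_lift G (W.single (A ::ₘ Γ) Δ Θ' Λ'))
      simpa only [Multiset.cons_add] using this
    · cases h1 with
      | single _ _ Θ' Λ' =>
        simp only [Multiset.cons_add]
        exact Deriv.boxL2 G Γ Δ (Θ+Θ') (Λ+Λ') A hprem
  | bboxL2 G Γ Δ Θ Λ A hprem ih =>
    rcases W_plug_up G _ _ _ T hw with ⟨G', h1, rfl⟩ | ⟨Θ', Λ', rfl⟩ | ⟨S', h1, rfl⟩
    · exact Deriv.bboxL2 G' Γ Δ Θ Λ A (ih (W_of_Wctx h1 _))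
    · refine Deriv.bboxL2 G (Γ+Θ') (Δ+Λ') Θ Λ A ?_
      have := ih (W_lift G (W.single (A ::ₘ Γ) Δ Θ' Λ'))
      simpa only [Multiset.cons_add] using this
    · cases h1 with
      | single _ _ Θ' Λ' =>
        simp only [Multiset.cons_add]
        exact Deriv.bboxL2 G Γ Δ (Θ+Θ') (Λ+Λ') A hprem

lemma W_withTail (Γ Δ Θ Λ : Multiset Formula) (H : TCtx) :
    W (withTail Γ Δ H) (withTail (Γ+Θ) (Δ+Λ) H) := by
  cases H with
  | nil => exact W.single Γ Δ Θ Λ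
  | cons x H =>
    obtain ⟨d, Θ', Λ'⟩ := x
    cases d
    · exact W.upHere Γ Δ Θ Λ _
    · exact W.dnHere Γ Δ Θ Λ _

/-- Admissibility of internal weakening in LNS_Kt. -/
theorem weakening_admissible (G : Ctx) (H : TCtx) (Γ Δ Θ Λ : Multiset Formula)
    (h : Deriv (plug G (withTail Γ Δ H))) :
    Deriv (plug G (withTail (Γ + Θ) (Δ + Λ) H)) := by
  exact deriv_W h (W_lift G (W_withTail Γ Δ Θ Λ H))
end
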